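/- Let f : ℝⁿ → ℝ and G : ℝⁿ → S^m be twice continuously differentiable, and let (x,Λ) ∈ ℝⁿ × S^m be a KKT pair of (P1). Then there exists Y ∈ S^m, which may be chosen positive semidefinite, such that (x,Y,Λ) is a KKT triple of (P2), i.e., ∇f(x) − DG(x)*Λ = 0, Λ∘Y = 0, and G(x) − Y∘Y = 0. -/

import Mathlib

open Matrix

noncomputable section

def jmul {m : ℕ} (A B : Matrix (Fin m) (Fin m) ℝ) : Matrix (Fin m) (Fin m) ℝ :=
  (1 / 2 : ℝ) • (A * B + B * A)

def minner {m : ℕ} (A B : Matrix (Fin m) (Fin m) ℝ) : ℝ :=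
  (A * B).trace

def memPhi {m : ℕ} (Λ Y : Matrix (Fin m) (Fin m) ℝ) : Prop :=
  ∀ W : Matrix (Fin m) (Fin m) ℝ, W.IsSymm → W ≠ 0 → jmul Y W = 0 →
    0 < minner (jmul W W) Λ

def pderivG {n m : ℕ} (G : (Fin n → ℝ) → Matrix (Fin m) (Fin m) ℝ)
    (x : Fin n → ℝ) (k : Fin n) : Matrix (Fin m) (Fin m) ℝ :=
  Matrix.of fun i j => fderiv ℝ (fun y => G y i j) x (Pi.single k 1)

def dirDerivG {n m : ℕ} (G : (Fin n → ℝ) → Matrix (Fin m) (Fin m) ℝ)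
    (x v : Fin n → ℝ) : Matrix (Fin m) (Fin m) ℝ :=
  ∑ k, v k • pderivG G x k

def adjDG {n m : ℕ} (G : (Fin n → ℝ) → Matrix (Fin m) (Fin m) ℝ)
    (x : Fin n → ℝ) (W : Matrix (Fin m) (Fin m) ℝ) : Fin n → ℝ :=
  fun k => minner (pderivG G x k) W

def gradf {n : ℕ} (f : (Fin n → ℝ) → ℝ) (x : Fin n → ℝ) : Fin n → ℝ :=
  fun k => fderiv ℝ f x (Pi.single k 1)

def KKT1 {n m : ℕ} (f : (Fin n → ℝ) → ℝ) (G : (Fin n → ℝ) → Matrix (Fin m) (Fin m) ℝ)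
    (x : Fin n → ℝ) (Λ : Matrix (Fin m) (Fin m) ℝ) : Prop :=
  gradf f x = adjDG G x Λ ∧ Λ.PosSemidef ∧ (G x).PosSemidef ∧ jmul Λ (G x) = 0

def KKT2 {n m : ℕ} (f : (Fin n → ℝ) → ℝ) (G : (Fin n → ℝ) → Matrix (Fin m) (Fin m) ℝ)
    (x : Fin n → ℝ) (Y Λ : Matrix (Fin m) (Fin m) ℝ) : Prop :=
  gradf f x = adjDG G x Λ ∧ jmul Λ Y = 0 ∧ G x = jmul Y Y

def hessQ {n m : ℕ} (f : (Fin n → ℝ) → ℝ) (G : (Fin n → ℝ) → Matrix (Fin m) (Fin m) ℝ)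
    (Λ : Matrix (Fin m) (Fin m) ℝ) (x v : Fin n → ℝ) : ℝ :=
  iteratedFDeriv ℝ 2 (fun y => f y - minner (G y) Λ) x ![v, v]

def SOSCNLP {n m : ℕ} (f : (Fin n → ℝ) → ℝ) (G : (Fin n → ℝ) → Matrix (Fin m) (Fin m) ℝ)
    (x : Fin n → ℝ) (Y Λ : Matrix (Fin m) (Fin m) ℝ) : Prop :=
  ∀ (v : Fin n → ℝ) (W : Matrix (Fin m) (Fin m) ℝ), W.IsSymm →
    ¬(v = 0 ∧ W = 0) → dirDerivG G x v = (2 : ℝ) • jmul Y W →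
    0 < hessQ f G Λ x v + 2 * minner (jmul W W) Λ

def SONCNLP {n m : ℕ} (f : (Fin n → ℝ) → ℝ) (G : (Fin n → ℝ) → Matrix (Fin m) (Fin m) ℝ)
    (x : Fin n → ℝ) (Y Λ : Matrix (Fin m) (Fin m) ℝ) : Prop :=
  ∀ (v : Fin n → ℝ) (W : Matrix (Fin m) (Fin m) ℝ), W.IsSymm →
    dirDerivG G x v = (2 : ℝ) • jmul Y W →
    0 ≤ hessQ f G Λ x v + 2 * minner (jmul W W) Λ

def LICQ {n m : ℕ} (G : (Fin n → ℝ) → Matrix (Fin m) (Fin m) ℝ)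
    (x : Fin n → ℝ) (Y : Matrix (Fin m) (Fin m) ℝ) : Prop :=
  ∀ W : Matrix (Fin m) (Fin m) ℝ, W.IsSymm → jmul Y W = 0 → adjDG G x W = 0 → W = 0

def Nondeg {n m : ℕ} (G : (Fin n → ℝ) → Matrix (Fin m) (Fin m) ℝ)
    (x : Fin n → ℝ) : Prop :=
  ∀ W : Matrix (Fin m) (Fin m) ℝ, W.IsSymm → G x * W = 0 → adjDG G x W = 0 → W = 0

def CritCone {n m : ℕ} (f : (Fin n → ℝ) → ℝ) (G : (Fin n → ℝ) → Matrix (Fin m) (Fin m) ℝ)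
    (x : Fin n → ℝ) : Set (Fin n → ℝ) :=
  {d | (∀ u : Fin m → ℝ, G x *ᵥ u = 0 → 0 ≤ u ⬝ᵥ (dirDerivG G x d *ᵥ u)) ∧
    gradf f x ⬝ᵥ d = 0}

def IsMPInv {m : ℕ} (A P : Matrix (Fin m) (Fin m) ℝ) : Prop :=
  A * P * A = A ∧ P * A * P = P ∧ (A * P)ᵀ = A * P ∧ (P * A)ᵀ = P * A

def Hmat {n m : ℕ} (G : (Fin n → ℝ) → Matrix (Fin m) (Fin m) ℝ)
    (x : Fin n → ℝ) (Λ P : Matrix (Fin m) (Fin m) ℝ) : Matrix (Fin n) (Fin n) ℝ :=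
  Matrix.of fun i j => 2 * (pderivG G x i * P * pderivG G x j * Λ).trace

lemma trace_transpose_mul_self_eq_zero' {m : ℕ} (A : Matrix (Fin m) (Fin m) ℝ)
    (h : (Aᵀ * A).trace = 0) : A = 0 := by
  have hexp : (Aᵀ * A).trace = ∑ j, ∑ i, (A i j) ^ 2 := by
    simp [Matrix.trace, Matrix.mul_apply, Matrix.diag, sq]
  rw [hexp] at h
  have hz : ∀ j ∈ Finset.univ, ∑ i, (A i j) ^ 2 = 0 := by
    rw [Finset.sum_eq_zero_iff_of_nonneg (fun j _ => Finset.sum_nonneg fun i _ => sq_nonneg _)] at h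
    exact h
  ext i j
  have := (Finset.sum_eq_zero_iff_of_nonneg (fun i _ => sq_nonneg (A i j))).mp
    (hz j (Finset.mem_univ j)) i (Finset.mem_univ i)
  exact pow_eq_zero_iff (two_ne_zero) |>.mp this

theorem stmt5 {n m : ℕ} (f : (Fin n → ℝ) → ℝ) (G : (Fin n → ℝ) → Matrix (Fin m) (Fin m) ℝ)
    (hf : ContDiff ℝ 2 f) (hG : ∀ i j, ContDiff ℝ 2 fun y => G y i j)
    (x : Fin n → ℝ) (Λ : Matrix (Fin m) (Fin m) ℝ)
    (hΛ : Λ.IsSymm) (hKKT : KKT1 f G x Λ) :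
    ∃ Y : Matrix (Fin m) (Fin m) ℝ, Y.PosSemidef ∧ KKT2 f G x Y Λ := by
  obtain ⟨hgrad, hΛps, hGps, hjmul⟩ := hKKT
  open scoped MatrixOrder in set A := CFC.sqrt Λ with hA
  open scoped MatrixOrder in set B := CFC.sqrt (G x) with hB
  have hAsymm : Aᵀ = A := by open scoped MatrixOrder in exact (CFC.sqrt_nonneg Λ).posSemidef.1
  have hBsymm : Bᵀ = B := by open scoped MatrixOrder in exact (CFC.sqrt_nonneg (G x)).posSemidef.1
  have hAA : A * A = Λ := by open scoped MatrixOrder in exact CFC.sqrt_mul_sqrt_self Λ hΛps.nonneg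
  have hBB : B * B = G x := by open scoped MatrixOrder in exact CFC.sqrt_mul_sqrt_self (G x) hGps.nonneg
  -- trace (Λ * G x) = 0
  have htr : (Λ * G x).trace = 0 := by
    have h2 : ((1 / 2 : ℝ) • (Λ * G x + G x * Λ)).trace = 0 := by
      rw [show (1 / 2 : ℝ) • (Λ * G x + G x * Λ) = jmul Λ (G x) from rfl, hjmul, Matrix.trace_zero]
    rw [Matrix.trace_smul, Matrix.trace_add, Matrix.trace_mul_comm (G x) Λ] at h2
    simp only [smul_eq_mul] at h2
    linarith
  -- A * B = 0
  have hAB : A * B = 0 := by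
    apply trace_transpose_mul_self_eq_zero'
    have : (A * B)ᵀ = B * A := by rw [Matrix.transpose_mul, hAsymm, hBsymm]
    rw [this]
    calc (B * A * (A * B)).trace = (A * B * (B * A)).trace := Matrix.trace_mul_comm _ _
      _ = (Λ * G x).trace := by
          rw [show A * B * (B * A) = A * (B * B) * A by noncomm_ring,
            hBB]
          rw [Matrix.trace_mul_comm, show A * (A * (G x)) = (A * A) * G x by noncomm_ring, hAA,
            Matrix.trace_mul_comm]
      _ = 0 := htr
  have hΛG : Λ * G x = 0 := by
    have : Λ * G x = A * (A * B) * B := by rw [← hAA, ← hBB]; noncomm_ring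
    rw [this, hAB]; simp
  -- B * Λ = 0
  have hBΛ : B * Λ = 0 := by
    apply trace_transpose_mul_self_eq_zero'
    have ht : (B * Λ)ᵀ = Λ * B := by rw [Matrix.transpose_mul, hBsymm, hΛ.eq]
    rw [ht]
    have : Λ * B * (B * Λ) = Λ * (G x) * Λ := by rw [← hBB]; noncomm_ring
    rw [this, hΛG]
    simp
  have hΛB : Λ * B = 0 := by
    have := congrArg Matrix.transpose hBΛ
    rwa [Matrix.transpose_mul, hBsymm, hΛ.eq, Matrix.transpose_zero] at this
  refine ⟨B, (by open scoped MatrixOrder in exact (CFC.sqrt_nonneg (G x)).posSemidef), hgrad, ?_, ?_⟩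
  · show (1 / 2 : ℝ) • (Λ * B + B * Λ) = 0
    rw [hΛB, hBΛ]; simp
  · show G x = (1 / 2 : ℝ) • (B * B + B * B)
    rw [hBB]
    ext i j
    simp [Matrix.smul_apply, Matrix.add_apply]
    ring
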